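/- The map h : WF(n) → Sym_+^1(n) sending the class (μ, π(U)) of (μ, U) ∈ Δ(n) × O(n) to U^T diag(λ_1,…,λ_n) U, where λ_k = Σ_{i=k}^n μ_i/i, is well defined and is a homeomorphism between WF(n) (with the quotient topology) and Sym_+^1(n) (with the topology induced by any matrix norm). -/

import Mathlib

/-!
Statement 2 (Proposition `prop:homeo`): the eigendecomposition map
`WF(n) → Sym_+^1(n)`, `(μ, π(U)) ↦ U diag(λ_1, …, λ_n) Uᵀ` with
`λ_k = ∑_{i=k}^n μ_i / i`, is a well-defined homeomorphism between the space of
weighted flags (with the quotient topology) and the symmetric positive semidefinite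
matrices of trace one (with the matrix topology).  Here the columns of `U ∈ O(n)`
are the eigenvectors, consistently with the definition of the equivalence relation of
weighted flags via spans of the first `k` columns.
-/

open Matrix Filter Topology

/-- The real orthogonal group `O(n)`. -/
abbrev OG (n : ℕ) := Matrix.orthogonalGroup (Fin n) ℝ

/-- The unit simplex `Δ(n)`. -/
abbrev Del (n : ℕ) := {v : Fin n → ℝ // (∀ i, 0 ≤ v i) ∧ ∑ i, v i = 1}

/-- The orthogonal projector onto the span of the columns of `U` indexed by `s`. -/
def colProj {n : ℕ} (U : OG n) (s : Finset (Fin n)) : Matrix (Fin n) (Fin n) ℝ :=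
  Matrix.of fun a b =>
    ∑ i ∈ s, (U : Matrix (Fin n) (Fin n) ℝ) a i * (U : Matrix (Fin n) (Fin n) ℝ) b i

/-- The defining equivalence of weighted flags on `Δ(n) × O(n)`. -/
def wfSetoid (n : ℕ) : Setoid (Del n × OG n) where
  r a b := a.1 = b.1 ∧
    ∀ k : Fin n, 0 < (a.1 : Fin n → ℝ) k →
      colProj a.2 (Finset.Iic k) = colProj b.2 (Finset.Iic k)
  iseqv := by
    constructor
    · exact fun a => ⟨rfl, fun _ _ => rfl⟩
    · rintro a b ⟨h1, h2⟩
      refine ⟨h1.symm, fun k hk => ?_⟩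
      rw [← h1] at hk
      exact (h2 k hk).symm
    · rintro a b c ⟨h1, h2⟩ ⟨h1', h2'⟩
      refine ⟨h1.trans h1', fun k hk => ?_⟩
      refine (h2 k hk).trans (h2' k ?_)
      rwa [← h1]

/-- The space `WF(n)` of weighted flags, with the quotient topology. -/
def WF (n : ℕ) := Quotient (wfSetoid n)

instance (n : ℕ) : TopologicalSpace (WF n) :=
  inferInstanceAs (TopologicalSpace (Quotient (wfSetoid n)))

/-- Class of a pair `(α, U)` in `WF(n)`. -/
def mkWF {n : ℕ} (p : Del n × OG n) : WF n := Quotient.mk (wfSetoid n) p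

/-- `Sym_+^1(n)`: symmetric positive semidefinite matrices of trace `1`, with the
topology induced by the space of matrices. -/
abbrev Sym1 (n : ℕ) := {A : Matrix (Fin n) (Fin n) ℝ // A.PosSemidef ∧ A.trace = 1}

/-- The (decreasing) eigenvalues associated with weights `μ ∈ Δ(n)`:
`λ_k = ∑_{i=k}^n μ_i / i` (`0`-based indices: `λ_k = ∑_{i ≥ k} μ_i / (i+1)`). -/
noncomputable def lamOf {n : ℕ} (μ : Fin n → ℝ) (k : Fin n) : ℝ :=
  ∑ i : Fin n, if (k : ℕ) ≤ (i : ℕ) then μ i / ((i : ℕ) + 1) else 0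

section Helpers
open Polynomial
variable {n : ℕ}

lemma lamOf_nonneg {μ : Fin n → ℝ} (hμ : ∀ i, 0 ≤ μ i) (k : Fin n) : 0 ≤ lamOf μ k :=
  Finset.sum_nonneg fun i _ => by
    split_ifs
    · exact div_nonneg (hμ i) (by positivity)
    · exact le_rfl

lemma lamOf_antitone {μ : Fin n → ℝ} (hμ : ∀ i, 0 ≤ μ i) : Antitone (lamOf μ) := by
  intro k k' h
  refine Finset.sum_le_sum fun i _ => ?_
  split_ifs with h1 h2
  · exact le_rfl
  · exact absurd (le_trans (Fin.le_def.mp h) h1) h2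
  all_goals first
    | exact le_rfl
    | exact div_nonneg (hμ i) (by positivity)

/-- Extension of `lamOf` to natural number thresholds. -/
noncomputable def lamExt (μ : Fin n → ℝ) (j : ℕ) : ℝ :=
  ∑ i : Fin n, if j ≤ (i : ℕ) then μ i / ((i : ℕ) + 1) else 0

lemma lamExt_coe (μ : Fin n → ℝ) (k : Fin n) : lamExt μ (k : ℕ) = lamOf μ k := rfl

lemma lamExt_n (μ : Fin n → ℝ) : lamExt μ n = 0 := by
  refine Finset.sum_eq_zero fun i _ => ?_
  rw [if_neg (by omega)]

lemma lamExt_sub (μ : Fin n → ℝ) (j : ℕ) :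
    lamExt μ j - lamExt μ (j + 1) = if h : j < n then μ ⟨j, h⟩ / (j + 1) else 0 := by
  rw [lamExt, lamExt, ← Finset.sum_sub_distrib]
  split_ifs with h
  · rw [Finset.sum_eq_single ⟨j, h⟩]
    · simp
    · intro i _ hi
      have : (i : ℕ) ≠ j := fun hc => hi (Fin.ext hc)
      split_ifs with h1 h2 h2 <;> simp_all <;> omega
    · simp
  · refine Finset.sum_eq_zero fun i _ => ?_
    have : ¬ j ≤ (i : ℕ) := by omega
    rw [if_neg this, if_neg (by omega), sub_zero]

lemma lamOf_inj {μ ν : Fin n → ℝ} (h : lamOf μ = lamOf ν) : μ = ν := by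
  funext k
  have h1 := lamExt_sub μ (k : ℕ)
  have h2 := lamExt_sub ν (k : ℕ)
  have he : ∀ j, lamExt μ j = lamExt ν j := by
    intro j
    by_cases hj : j < n
    · calc lamExt μ j = lamOf μ ⟨j, hj⟩ := rfl
        _ = lamOf ν ⟨j, hj⟩ := by rw [h]
        _ = lamExt ν j := rfl
    · unfold lamExt
      refine (Finset.sum_congr rfl fun i _ => ?_)
      rw [if_neg (by omega), if_neg (by omega)]
  rw [he, he, h2, dif_pos k.2] at h1
  rw [dif_pos k.2] at h1
  have hk : ((k : ℕ) + 1 : ℝ) ≠ 0 := by positivity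
  field_simp at h1
  linarith

lemma sum_lamOf (μ : Fin n → ℝ) : ∑ k, lamOf μ k = ∑ i, μ i := by
  unfold lamOf
  rw [Finset.sum_comm]
  refine Finset.sum_congr rfl fun i _ => ?_
  rw [Finset.sum_ite, Finset.sum_const, Finset.sum_const_zero, add_zero]
  have hc : (Finset.univ.filter fun k : Fin n => (k : ℕ) ≤ (i : ℕ)) = Finset.Iic i := by
    ext k; simp only [Finset.mem_filter, Finset.mem_univ, true_and, Finset.mem_Iic, Fin.le_def]
  rw [hc, Fin.card_Iic, nsmul_eq_mul]
  have : ((i : ℕ) + 1 : ℝ) ≠ 0 := by positivity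
  push_cast
  field_simp

end Helpers
section MatrixHelpers
open Polynomial
variable {n : ℕ}

local notation "M" => Matrix (Fin n) (Fin n) ℝ

lemma conj_diag_apply (U : M) (d : Fin n → ℝ) (a b : Fin n) :
    (U * Matrix.diagonal d * Uᵀ) a b = ∑ i, U a i * d i * U b i := by
  rw [Matrix.mul_apply]
  simp only [Matrix.mul_diagonal, Matrix.transpose_apply]

lemma OG_transpose_eq_star (U : OG n) : (U : M)ᵀ = star (U : M) := by
  rw [Matrix.star_eq_conjTranspose, Matrix.conjTranspose_eq_transpose_of_trivial]

lemma OG_mul_transpose (U : OG n) : (U : M) * (U : M)ᵀ = 1 := by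
  rw [OG_transpose_eq_star]
  exact Matrix.mem_unitaryGroup_iff.mp U.2

lemma OG_transpose_mul (U : OG n) : (U : M)ᵀ * (U : M) = 1 := by
  rw [OG_transpose_eq_star]
  exact Matrix.mem_unitaryGroup_iff'.mp U.2

lemma col_orthonormal (U : OG n) (i j : Fin n) :
    ∑ a, (U : M) a i * (U : M) a j = if i = j then 1 else 0 := by
  have h : ((U : M)ᵀ * (U : M)) i j = (1 : M) i j := by rw [OG_transpose_mul]
  simpa [Matrix.mul_apply, Matrix.transpose_apply, Matrix.one_apply] using h

lemma colProj_eq (U : OG n) (k : Fin n) :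
    colProj U (Finset.Iic k)
      = (U : M) * Matrix.diagonal (fun i => if i ≤ k then (1 : ℝ) else 0) * (U : M)ᵀ := by
  ext a b
  rw [conj_diag_apply]
  show ∑ i ∈ Finset.Iic k, (U : M) a i * (U : M) b i = _
  have : Finset.Iic k = Finset.filter (fun i => i ≤ k) Finset.univ := by
    ext i
    simp only [Finset.mem_filter, Finset.mem_univ, true_and, Finset.mem_Iic]
  rw [this, Finset.sum_filter]
  refine Finset.sum_congr rfl fun i _ => ?_
  split_ifs <;> ring

/-- The decomposition of the conjugated diagonal matrix as a weighted sum of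
column projectors. -/
lemma conj_decomp (μ : Fin n → ℝ) (U : OG n) :
    (U : M) * Matrix.diagonal (lamOf μ) * (U : M)ᵀ
      = ∑ k : Fin n, (μ k / ((k : ℕ) + 1)) • colProj U (Finset.Iic k) := by
  ext a b
  rw [conj_diag_apply, Matrix.sum_apply]
  have hrhs : ∀ k : Fin n,
      ((μ k / ((k : ℕ) + 1)) • colProj U (Finset.Iic k)) a b
        = ∑ i : Fin n, (if (i : ℕ) ≤ (k : ℕ) then μ k / ((k : ℕ) + 1) * (U a i * U b i) else 0) := by
    intro k
    rw [Matrix.smul_apply]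
    show (μ k / ((k : ℕ) + 1)) * ∑ i ∈ Finset.Iic k, (U : M) a i * (U : M) b i = _
    rw [Finset.mul_sum]
    have : Finset.Iic k = Finset.filter (fun i : Fin n => (i : ℕ) ≤ (k : ℕ)) Finset.univ := by
      ext i
      simp only [Finset.mem_filter, Finset.mem_univ, true_and, Finset.mem_Iic, Fin.le_def]
    rw [this, Finset.sum_filter]
  simp only [hrhs]
  rw [Finset.sum_comm]
  refine Finset.sum_congr rfl fun i _ => ?_
  rw [lamOf, Finset.mul_sum, Finset.sum_mul]
  refine Finset.sum_congr rfl fun k _ => ?_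
  split_ifs <;> ring

/-- Conjugation by an orthogonal matrix as an `ℝ`-algebra homomorphism. -/
def conjAH (U : OG n) : Matrix (Fin n) (Fin n) ℝ →ₐ[ℝ] Matrix (Fin n) (Fin n) ℝ where
  toFun X := (U : M) * X * (U : M)ᵀ
  map_one' := by show (U : M) * 1 * (U : M)ᵀ = 1; rw [mul_one, OG_mul_transpose]
  map_mul' X Y := by
    show (U : M) * (X * Y) * (U : M)ᵀ
      = ((U : M) * X * (U : M)ᵀ) * ((U : M) * Y * (U : M)ᵀ)
    simp only [mul_assoc]
    rw [← mul_assoc ((U : M)ᵀ) (U : M), OG_transpose_mul, one_mul]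
  map_zero' := by show (U : M) * 0 * (U : M)ᵀ = 0; rw [mul_zero, zero_mul]
  map_add' X Y := by
    show (U : M) * (X + Y) * (U : M)ᵀ = (U : M) * X * (U : M)ᵀ + (U : M) * Y * (U : M)ᵀ
    rw [mul_add, add_mul]
  commutes' r := by
    show (U : M) * (algebraMap ℝ M r) * (U : M)ᵀ = algebraMap ℝ M r
    rw [Algebra.algebraMap_eq_smul_one]
    rw [mul_smul_comm, smul_mul_assoc, mul_one, OG_mul_transpose]

lemma aeval_conj (U : OG n) (d : Fin n → ℝ) (q : Polynomial ℝ) :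
    Polynomial.aeval ((U : M) * Matrix.diagonal d * (U : M)ᵀ) q
      = (U : M) * Matrix.diagonal (fun i => q.eval (d i)) * (U : M)ᵀ := by
  have h4 : Polynomial.aeval d q = fun i => q.eval (d i) := by
    funext i
    have h5 := Polynomial.aeval_algHom_apply (Pi.evalAlgHom ℝ (fun _ : Fin n => ℝ) i) d q
    exact (h5.symm.trans (congrFun (Polynomial.coe_aeval_eq_eval (d i)) q) :)
  have h2 : Polynomial.aeval (Matrix.diagonal d) q
      = Matrix.diagonal (fun i => q.eval (d i)) := by
    have h3 := Polynomial.aeval_algHom_apply ((Matrix.diagonalAlgHom ℝ : (Fin n → ℝ) →ₐ[ℝ] M)) d q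
    simp only [Matrix.diagonalAlgHom_apply] at h3
    rw [h3, h4]
  have h1 := Polynomial.aeval_algHom_apply (conjAH U) (Matrix.diagonal d) q
  have hc : conjAH U (Matrix.diagonal d) = (U : M) * Matrix.diagonal d * (U : M)ᵀ := rfl
  rw [hc] at h1
  rw [h1, h2]
  rfl

lemma charpoly_conj (U : OG n) (D : M) : ((U : M) * D * (U : M)ᵀ).charpoly = D.charpoly := by
  classical
  set C' : ℝ →+* Polynomial ℝ := Polynomial.C
  set U' : Matrix (Fin n) (Fin n) (Polynomial ℝ) := ((U : M)).map C' with hU'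
  have hmul : ∀ A B : M, (A * B).map C' = A.map C' * B.map C' := fun A B => Matrix.map_mul
  have hUU : U' * ((U : M)ᵀ).map C' = 1 := by
    rw [← hmul, OG_mul_transpose, Matrix.map_one _ (map_zero C') (map_one C')]
  have hUU' : ((U : M)ᵀ).map C' * U' = 1 := by
    rw [← hmul, OG_transpose_mul, Matrix.map_one _ (map_zero C') (map_one C')]
  have key : Matrix.charmatrix ((U : M) * D * (U : M)ᵀ)
      = U' * Matrix.charmatrix D * ((U : M)ᵀ).map C' := by
    unfold Matrix.charmatrix
    rw [Matrix.mul_sub, Matrix.sub_mul]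
    congr 1
    · -- U' * scalar X * U'ᵀ = scalar X
      rw [← (Matrix.scalar_commute (X : Polynomial ℝ) (fun r => Commute.all _ _) U').eq,
        mul_assoc, hUU, mul_one]
    · show ((U : M) * D * (U : M)ᵀ).map C' = U' * D.map C' * ((U : M)ᵀ).map C'
      rw [hmul, hmul]
  rw [Matrix.charpoly, key, Matrix.det_mul, Matrix.det_mul, mul_comm, ← mul_assoc,
    ← Matrix.det_mul, hUU', Matrix.det_one, one_mul]
  rfl

end MatrixHelpers
section MoreHelpers
open Polynomial
variable {n : ℕ}

local notation "M" => Matrix (Fin n) (Fin n) ℝ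

lemma charpoly_diag (d : Fin n → ℝ) :
    (Matrix.diagonal d).charpoly = ∏ i, (X - C (d i)) := by
  rw [Matrix.charpoly_of_upperTriangular _ (Matrix.blockTriangular_diagonal d)]
  refine Finset.prod_congr rfl fun i _ => ?_
  rw [Matrix.diagonal_apply_eq]

lemma antitone_eq_of_prod_eq {lam lam' : Fin n → ℝ} (h1 : Antitone lam) (h2 : Antitone lam')
    (h : ∏ i, (X - C (lam i)) = ∏ i, (X - C (lam' i))) : lam = lam' := by
  have e : ∀ f : Fin n → ℝ, ∏ i, (X - C (f i)) = ((Finset.univ.val.map f).map fun a => X - C a).prod := by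
    intro f
    rw [Multiset.map_map]
    rfl
  rw [e, e] at h
  have hr : Finset.univ.val.map lam = Finset.univ.val.map lam' := by
    rw [← Polynomial.roots_multiset_prod_X_sub_C (Finset.univ.val.map lam), h,
      Polynomial.roots_multiset_prod_X_sub_C]
  have huniv : (Finset.univ.val : Multiset (Fin n)) = ↑(List.finRange n) := rfl
  rw [huniv, Multiset.map_coe, Multiset.map_coe, Multiset.coe_eq_coe] at hr
  haveI : IsAntisymm ℝ (· ≥ ·) := ⟨fun a b hab hba => le_antisymm hba hab⟩
  have hs : ∀ f : Fin n → ℝ, Antitone f → List.Pairwise (· ≥ ·) ((List.finRange n).map f) := by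
    intro f hf
    rw [List.pairwise_map]
    exact (List.pairwise_lt_finRange n).imp fun hab => hf hab.le
  have := List.Perm.eq_of_pairwise (fun a b _ _ hab hba => le_antisymm hba hab) (hs _ h1) (hs _ h2) hr
  rw [← List.ofFn_eq_map, ← List.ofFn_eq_map] at this
  exact List.ofFn_inj.mp this

lemma conj_posSemidef {μ : Fin n → ℝ} (hμ : ∀ i, 0 ≤ μ i) (U : OG n) :
    ((U : M) * Matrix.diagonal (lamOf μ) * (U : M)ᵀ).PosSemidef := by
  have hd : (Matrix.diagonal (lamOf μ)).PosSemidef :=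
    Matrix.posSemidef_diagonal_iff.mpr (lamOf_nonneg hμ)
  have := hd.mul_mul_conjTranspose_same (U : M)
  simpa [Matrix.conjTranspose_eq_transpose_of_trivial] using this

lemma conj_trace_eq (d : Fin n → ℝ) (U : OG n) :
    ((U : M) * Matrix.diagonal d * (U : M)ᵀ).trace = ∑ i, d i := by
  rw [Matrix.trace_mul_cycle, OG_transpose_mul, one_mul, Matrix.trace_diagonal]

end MoreHelpers
section Topo
instance delCompact (n : ℕ) : CompactSpace (Del n) :=
  isCompact_iff_compactSpace.mp (isCompact_stdSimplex ℝ (Fin n))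

lemma isCompact_OG (n : ℕ) : IsCompact (Matrix.unitaryGroup (Fin n) ℝ : Set (Matrix (Fin n) (Fin n) ℝ)) := by
  have hK : IsCompact {A : Matrix (Fin n) (Fin n) ℝ | ∀ i j, A i j ∈ Set.Icc (-1 : ℝ) 1} := by
    have h1 : IsCompact (X := Matrix (Fin n) (Fin n) ℝ) (Set.pi Set.univ fun _ : Fin n =>
        (Set.pi Set.univ fun _ : Fin n => Set.Icc (-1 : ℝ) 1)) :=
      isCompact_univ_pi fun _ => isCompact_univ_pi fun _ => isCompact_Icc
    refine Eq.mpr (congrArg (IsCompact (X := Matrix (Fin n) (Fin n) ℝ)) ?_) h1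
    ext A
    exact ⟨fun h i _ j _ => h i j, fun h i j => h i (Set.mem_univ i) j (Set.mem_univ j)⟩
  refine IsCompact.of_isClosed_subset hK ?_ ?_
  · have hcont : Continuous fun A : Matrix (Fin n) (Fin n) ℝ => star A * A :=
      Continuous.matrix_mul (continuous_star) continuous_id
    have : (Matrix.unitaryGroup (Fin n) ℝ : Set (Matrix (Fin n) (Fin n) ℝ))
        = (fun A : Matrix (Fin n) (Fin n) ℝ => star A * A) ⁻¹' {1} := by
      ext A
      simp only [Set.mem_preimage, Set.mem_singleton_iff, SetLike.mem_coe,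
        Matrix.mem_unitaryGroup_iff']
    rw [this]
    exact (isClosed_singleton).preimage hcont
  · intro A hA i j
    have := entry_norm_bound_of_unitary (𝕜 := ℝ) hA i j
    rw [Real.norm_eq_abs] at this
    exact abs_le.mp this

instance ogCompact (n : ℕ) : CompactSpace (OG n) :=
  isCompact_iff_compactSpace.mp (isCompact_OG n)

instance wfCompact (n : ℕ) : CompactSpace (WF n) :=
  Quotient.compactSpace

end Topo
section Core
open Polynomial

/-- The eigendecomposition map on representatives. -/
noncomputable def toSym {n : ℕ} (p : Del n × OG n) : Sym1 n :=
  ⟨(p.2 : Matrix (Fin n) (Fin n) ℝ) * Matrix.diagonal (lamOf (p.1 : Fin n → ℝ)) *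
      (p.2 : Matrix (Fin n) (Fin n) ℝ)ᵀ,
   conj_posSemidef p.1.2.1 p.2,
   by rw [conj_trace_eq, sum_lamOf, p.1.2.2]⟩

lemma toSym_respects {n : ℕ} (a b : Del n × OG n) (hab : (wfSetoid n).r a b) :
    toSym a = toSym b := by
  obtain ⟨μ, U⟩ := a
  obtain ⟨ν, V⟩ := b
  obtain ⟨h1, h2⟩ := hab
  dsimp only at h1
  subst h1
  apply Subtype.ext
  show (U : Matrix (Fin n) (Fin n) ℝ) * Matrix.diagonal (lamOf (μ : Fin n → ℝ)) * (U : Matrix (Fin n) (Fin n) ℝ)ᵀ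
    = (V : Matrix (Fin n) (Fin n) ℝ) * Matrix.diagonal (lamOf (μ : Fin n → ℝ)) * (V : Matrix (Fin n) (Fin n) ℝ)ᵀ
  rw [conj_decomp, conj_decomp]
  refine Finset.sum_congr rfl fun k _ => ?_
  rcases (μ.2.1 k).lt_or_eq with hk | hk
  · rw [h2 k hk]
  · rw [← hk]
    simp

lemma toSym_inj {n : ℕ} {a b : Del n × OG n} (h : toSym a = toSym b) : (wfSetoid n).r a b := by
  obtain ⟨μ, U⟩ := a
  obtain ⟨ν, V⟩ := b
  have hM : (U : Matrix (Fin n) (Fin n) ℝ) * Matrix.diagonal (lamOf (μ : Fin n → ℝ)) * (U : Matrix (Fin n) (Fin n) ℝ)ᵀ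
      = (V : Matrix (Fin n) (Fin n) ℝ) * Matrix.diagonal (lamOf (ν : Fin n → ℝ)) * (V : Matrix (Fin n) (Fin n) ℝ)ᵀ :=
    congrArg Subtype.val h
  have hchar := congrArg Matrix.charpoly hM
  rw [charpoly_conj, charpoly_conj, charpoly_diag, charpoly_diag] at hchar
  have hlam : lamOf (μ : Fin n → ℝ) = lamOf (ν : Fin n → ℝ) :=
    antitone_eq_of_prod_eq (lamOf_antitone μ.2.1) (lamOf_antitone ν.2.1) hchar
  have hμν : (μ : Fin n → ℝ) = (ν : Fin n → ℝ) := lamOf_inj hlam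
  refine ⟨Subtype.ext hμν, fun k hk => ?_⟩
  set lam : Fin n → ℝ := lamOf (μ : Fin n → ℝ) with hlamdef
  set s : Finset ℝ := Finset.image lam Finset.univ with hs
  set r : ℝ → ℝ := fun t => if lam k ≤ t then 1 else 0 with hr
  set q : Polynomial ℝ := Lagrange.interpolate s id r with hq
  have hinj : Set.InjOn id (s : Set ℝ) := Function.injective_id.injOn
  have heval : ∀ i : Fin n, q.eval (lam i) = if i ≤ k then 1 else 0 := by
    intro i
    have hmem : lam i ∈ s := Finset.mem_image_of_mem lam (Finset.mem_univ i)
    have hnode := Lagrange.eval_interpolate_at_node r hinj hmem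
    rw [id_eq] at hnode
    rw [← hq] at hnode
    rw [hnode]
    by_cases hik : i ≤ k
    · show (if lam k ≤ lam i then (1:ℝ) else 0) = if i ≤ k then (1:ℝ) else 0
      rw [if_pos (lamOf_antitone μ.2.1 hik), if_pos hik]
    · have hki : (k : ℕ) + 1 ≤ (i : ℕ) := by
        have := Fin.lt_def.mp (not_le.mp hik)
        omega
      have hk1 : (k : ℕ) + 1 < n := lt_of_le_of_lt hki i.2
      have hgap : lamExt (μ : Fin n → ℝ) ((k : ℕ) + 1) < lam k := by
        have hsub := lamExt_sub (μ : Fin n → ℝ) (k : ℕ)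
        rw [dif_pos k.2] at hsub
        have hpos : 0 < (μ : Fin n → ℝ) k / ((k : ℕ) + 1) :=
          div_pos hk (by positivity)
        have hcoe : lamExt (μ : Fin n → ℝ) (k : ℕ) = lam k := rfl
        rw [Fin.eta] at hsub
        linarith [hsub, hpos, hcoe]
      have hle : lam i ≤ lamExt (μ : Fin n → ℝ) ((k : ℕ) + 1) := by
        have : lamExt (μ : Fin n → ℝ) ((k : ℕ) + 1) = lam ⟨(k : ℕ) + 1, hk1⟩ := rfl
        rw [this]
        exact lamOf_antitone μ.2.1 (by rw [Fin.le_def]; exact hki)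
      have hlt : lam i < lam k := lt_of_le_of_lt hle hgap
      show (if lam k ≤ lam i then (1:ℝ) else 0) = if i ≤ k then (1:ℝ) else 0
      rw [if_neg (not_le.mpr hlt), if_neg hik]
  have hdiag : (fun i => q.eval (lam i)) = fun i => if i ≤ k then (1 : ℝ) else 0 := funext heval
  have e1 := aeval_conj U lam q
  have e2 := aeval_conj V lam q
  rw [hdiag] at e1 e2
  rw [colProj_eq, colProj_eq]
  have hlam2 : lamOf (ν : Fin n → ℝ) = lam := hlam.symm
  calc (U : Matrix (Fin n) (Fin n) ℝ) * Matrix.diagonal (fun i => if i ≤ k then (1:ℝ) else 0) * (U : Matrix (Fin n) (Fin n) ℝ)ᵀ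
      = Polynomial.aeval ((U : Matrix (Fin n) (Fin n) ℝ) * Matrix.diagonal lam * (U : Matrix (Fin n) (Fin n) ℝ)ᵀ) q := e1.symm
    _ = Polynomial.aeval ((V : Matrix (Fin n) (Fin n) ℝ) * Matrix.diagonal lam * (V : Matrix (Fin n) (Fin n) ℝ)ᵀ) q := by
        rw [hM, hlam2]
    _ = (V : Matrix (Fin n) (Fin n) ℝ) * Matrix.diagonal (fun i => if i ≤ k then (1:ℝ) else 0) * (V : Matrix (Fin n) (Fin n) ℝ)ᵀ := e2

end Core
section Surj
open Polynomial

lemma toSym_surj {n : ℕ} : Function.Surjective (toSym (n := n)) := by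
  rintro ⟨A, hpsd, htr⟩
  have hA : A.IsHermitian := hpsd.1
  set W : OG n := hA.eigenvectorUnitary with hW
  set e : Fin n → ℝ := hA.eigenvalues with he
  have hspec : A = (W : Matrix (Fin n) (Fin n) ℝ) * Matrix.diagonal e *
      (W : Matrix (Fin n) (Fin n) ℝ)ᵀ := by
    have h0 := hA.spectral_theorem
    rw [RCLike.ofReal_real_eq_id, Function.id_comp] at h0
    rw [OG_transpose_eq_star]
    exact h0
  set σ : Equiv.Perm (Fin n) := Tuple.sort (fun i => - e i) with hσ
  set lam : Fin n → ℝ := e ∘ σ with hlamdef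
  have hanti : Antitone lam := by
    intro x y hxy
    have hm := Tuple.monotone_sort (fun i => - e i) hxy
    simp only [Function.comp_apply] at hm
    have : -(e (σ x)) ≤ -(e (σ y)) := hm
    simpa [hlamdef] using neg_le_neg_iff.mp this
  have hnonneg : ∀ i, 0 ≤ lam i := fun i => hpsd.eigenvalues_nonneg _
  set Λ : ℕ → ℝ := fun j => if h : j < n then lam ⟨j, h⟩ else 0 with hΛ
  set μ : Fin n → ℝ := fun k => ((k : ℕ) + 1) * (Λ ((k : ℕ) + 1 - 1) - Λ ((k : ℕ) + 1)) with hμ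
  have hμval : ∀ k : Fin n, μ k = ((k : ℕ) + 1) * (Λ (k : ℕ) - Λ ((k : ℕ) + 1)) := by
    intro k; simp [hμ]
  have hΛanti : ∀ j, Λ (j + 1) ≤ Λ j := by
    intro j
    by_cases h1 : j + 1 < n
    · have h0 : j < n := by omega
      simp only [hΛ, dif_pos h1, dif_pos h0]
      exact hanti (by rw [Fin.le_def]; simp)
    · by_cases h0 : j < n
      · simp only [hΛ, dif_neg h1, dif_pos h0]
        exact hnonneg _
      · simp only [hΛ, dif_neg h1, dif_neg h0]
        exact le_rfl
  have hμ0 : ∀ k, 0 ≤ μ k := by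
    intro k
    rw [hμval]
    exact mul_nonneg (by positivity) (sub_nonneg.mpr (hΛanti (k : ℕ)))
  have hdiff : ∀ j, lamExt μ j - lamExt μ (j + 1) = Λ j - Λ (j + 1) := by
    intro j
    rw [lamExt_sub]
    split_ifs with h
    · rw [hμval ⟨j, h⟩]
      have : ((j : ℕ) + 1 : ℝ) ≠ 0 := by positivity
      field_simp
    · have h2 : ¬ (j + 1 < n) := by omega
      simp only [hΛ, dif_neg h, dif_neg h2, sub_zero]
  have hΛn : Λ n = 0 := by simp [hΛ]
  have key : ∀ j, j ≤ n → lamExt μ j = Λ j := by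
    intro j hj
    induction' hd : n - j with m ih generalizing j
    · have hjn : j = n := by omega
      subst hjn
      rw [lamExt_n, hΛn]
    · have hj1 : j + 1 ≤ n := by omega
      have ih1 := ih (j + 1) hj1 (by omega)
      have hd1 := hdiff j
      linarith
  have hlamOf : lamOf μ = lam := by
    funext k
    have h1 : lamOf μ k = lamExt μ (k : ℕ) := rfl
    rw [h1, key (k : ℕ) (le_of_lt k.2)]
    simp only [hΛ, dif_pos k.2, Fin.eta]
  have htrace : A.trace = ∑ i, e i := by
    rw [hspec, conj_trace_eq]
  have hsum : ∑ i, μ i = 1 := by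
    rw [← sum_lamOf μ, hlamOf]
    have : ∑ k, lam k = ∑ i, e i := Equiv.sum_comp σ e
    rw [this, ← htrace, htr]
  set U : Matrix (Fin n) (Fin n) ℝ := (W : Matrix (Fin n) (Fin n) ℝ).submatrix id σ with hU
  have hUmem : U ∈ Matrix.unitaryGroup (Fin n) ℝ := by
    rw [Matrix.mem_unitaryGroup_iff']
    ext i j
    rw [Matrix.mul_apply]
    simp only [hU, Matrix.star_apply, Matrix.submatrix_apply, id_eq, star_trivial]
    rw [show ∑ a, (W : Matrix (Fin n) (Fin n) ℝ) a (σ i) * (W : Matrix (Fin n) (Fin n) ℝ) a (σ j)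
        = if σ i = σ j then (1:ℝ) else 0 from col_orthonormal W (σ i) (σ j)]
    rw [Matrix.one_apply]
    simp [EmbeddingLike.apply_eq_iff_eq]
  refine ⟨(⟨μ, hμ0, hsum⟩, ⟨U, hUmem⟩), ?_⟩
  apply Subtype.ext
  show U * Matrix.diagonal (lamOf μ) * Uᵀ = A
  rw [hlamOf, hspec]
  ext a b
  rw [conj_diag_apply, conj_diag_apply]
  have := Equiv.sum_comp σ (fun j => (W : Matrix (Fin n) (Fin n) ℝ) a j * e j *
    (W : Matrix (Fin n) (Fin n) ℝ) b j)
  simpa only [hU, Matrix.submatrix_apply, id_eq, hlamdef, Function.comp_apply] using this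

end Surj
lemma toSym_continuous {n : ℕ} : Continuous (toSym (n := n)) := by
  apply Continuous.subtype_mk
  have hU : Continuous fun p : Del n × OG n => (p.2 : Matrix (Fin n) (Fin n) ℝ) :=
    continuous_subtype_val.comp continuous_snd
  have hdiag : Continuous fun p : Del n × OG n => Matrix.diagonal (lamOf (p.1 : Fin n → ℝ)) := by
    apply Continuous.matrix_diagonal
    refine continuous_pi fun k => ?_
    unfold lamOf
    refine continuous_finset_sum _ fun i _ => ?_
    split_ifs
    · exact ((continuous_apply i).comp (continuous_subtype_val.comp continuous_fst)).div_const _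
    · exact continuous_const
  exact (hU.matrix_mul hdiag).matrix_mul hU.matrix_transpose

/-- **Weighted flags are homeomorphic to `Sym_+^1(n)`** (Proposition 1.14 of the
paper).  The map sending the class of `(μ, U) ∈ Δ(n) × O(n)` to
`U diag(λ_1, …, λ_n) Uᵀ`, where `λ_k = ∑_{i=k}^n μ_i / i`, is well defined on the
quotient `WF(n)` and is a homeomorphism onto `Sym_+^1(n)`. -/
theorem weightedFlags_homeo_sym1 (n : ℕ) :
    ∃ h : WF n ≃ₜ Sym1 n,
      ∀ p : Del n × OG n,
        (h (mkWF p) : Matrix (Fin n) (Fin n) ℝ) =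
          (p.2 : Matrix (Fin n) (Fin n) ℝ) * Matrix.diagonal (lamOf (p.1 : Fin n → ℝ)) *
            (p.2 : Matrix (Fin n) (Fin n) ℝ)ᵀ := by
  classical
  have hresp : ∀ a b : Del n × OG n, (wfSetoid n).r a b → toSym a = toSym b := toSym_respects
  let F : WF n → Sym1 n := Quotient.lift toSym hresp
  have hFc : Continuous F := toSym_continuous.quotient_lift hresp
  have hbij : Function.Bijective F := by
    constructor
    · intro x y
      induction x using Quotient.ind with | _ a =>
      induction y using Quotient.ind with | _ b =>
      intro hxy
      exact Quotient.sound (toSym_inj (hxy : toSym a = toSym b))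
    · intro A
      obtain ⟨p, hp⟩ := toSym_surj A
      exact ⟨mkWF p, hp⟩
  let E : WF n ≃ Sym1 n := Equiv.ofBijective F hbij
  have hEc : Continuous (E : WF n → Sym1 n) := hFc
  exact ⟨hEc.homeoOfEquivCompactToT2, fun p => rfl⟩
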